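/- For every integer r ≥ 1, the set of integers whose far-difference representation has largest-index summand +F_r is exactly the interval of integers (S_{r−1}, S_r]; in particular N(+F_r) = S_r − S_{r−1}. Moreover, by the symmetry m ↔ −m, N(−F_r) = N(+F_r). -/
import Mathlib


/-- The Fibonacci numbers indexed as `F 1 = 1, F 2 = 2, F 3 = 3, F 4 = 5, …`,
so `F (n+1) = F n + F (n-1)`. -/
def F (n : ℕ) : ℕ := Nat.fib (n + 1)

/-- `(P, N)` encodes a far-difference representation: `P` is the set of indices of
positive summands and `N` the set of indices of negative summands; all indices are `≥ 1`,
same-sign indices differ by at least `4`, and opposite-sign indices differ by at least `3`. -/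
def IsFarDiff (P N : Finset ℕ) : Prop :=
  (∀ i ∈ P, 1 ≤ i) ∧ (∀ i ∈ N, 1 ≤ i) ∧
  (∀ i ∈ P, ∀ j ∈ P, i < j → 4 ≤ j - i) ∧
  (∀ i ∈ N, ∀ j ∈ N, i < j → 4 ≤ j - i) ∧
  (∀ i ∈ P, ∀ j ∈ N, (i < j → 3 ≤ j - i) ∧ (j < i → 3 ≤ i - j) ∧ i ≠ j)

/-- The integer represented by the far-difference data `(P, N)`:
`∑_{i ∈ P} F i − ∑_{i ∈ N} F i`. -/
def fdVal (P N : Finset ℕ) : ℤ :=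
  (∑ i ∈ P, (F i : ℤ)) - ∑ i ∈ N, (F i : ℤ)

/-- `S n = F n + F (n-4) + F (n-8) + ⋯`, the sum over positive indices, with `S 0 = 0`. -/
def S : ℕ → ℕ
  | 0 => 0
  | n + 1 => F (n + 1) + S (n + 1 - 4)

/-- The summand `ε F i` occurs in the representation `(P, N)`:
`i ∈ P` if `ε = 1`, and `i ∈ N` if `ε = -1`. -/
def SignedMem (ε : ℤ) (i : ℕ) (P N : Finset ℕ) : Prop :=
  (ε = 1 ∧ i ∈ P) ∨ (ε = -1 ∧ i ∈ N)

/-- The set of (nonzero) integers whose far-difference representation has largest-index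
summand `ε' F j`. -/
def fdTopSet (ε' : ℤ) (j : ℕ) : Set ℤ :=
  {m : ℤ | ∃ P N : Finset ℕ, IsFarDiff P N ∧ fdVal P N = m ∧
    SignedMem ε' j P N ∧ ∀ r ∈ P ∪ N, r ≤ j}

/-- `N(ε' F j)`: the number of nonzero integers whose far-difference representation has
largest-index summand `ε' F j`. -/
noncomputable def fdTopCount (ε' : ℤ) (j : ℕ) : ℕ :=
  (fdTopSet ε' j).ncard

/- ### Auxiliary lemmas -/

lemma S_zero : S 0 = 0 := by rw [S]
lemma S_succ (n : ℕ) : S (n+1) = F (n+1) + S (n+1-4) := by rw [S]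
lemma S_add4 (n : ℕ) : S (n+4) = F (n+4) + S n := by
  have h : n + 4 = (n+3) + 1 := by ring
  rw [h, S_succ]; congr 1

lemma F_pos (n : ℕ) : 1 ≤ F n := Nat.fib_pos.mpr (Nat.succ_pos n)
lemma F_mono : Monotone F := fun a b h => Nat.fib_mono (by omega)
lemma F_add2 (n : ℕ) : F (n+2) = F (n+1) + F n := by
  simp only [F]
  rw [show n+2+1 = n+1+2 from by ring, Nat.fib_add_two]; omega

lemma S_le_succ : ∀ n, S n ≤ S (n+1)
  | 0 => by simp [S_zero]
  | 1 => by simp [S_succ, S_zero]; exact F_mono (by norm_num)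
  | 2 => by simp [S_succ, S_zero]; exact F_mono (by norm_num)
  | 3 => by
      show S 3 ≤ S (0 + 4)
      rw [S_add4, S_zero]
      simp [S_succ, S_zero]; exact F_mono (by norm_num)
  | n+4 => by
      have ih := S_le_succ n
      rw [S_add4, show n+4+1 = (n+1)+4 from by ring, S_add4]
      have := F_mono (show n+4 ≤ n+1+4 by omega)
      omega

lemma S_mono : Monotone S := monotone_nat_of_le_succ S_le_succ

lemma S_pos_of_pos (n : ℕ) (h : 1 ≤ n) : 1 ≤ S n := by
  obtain ⟨m, rfl⟩ := Nat.exists_eq_add_of_le h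
  rw [show 1 + m = m + 1 from by ring, S_succ]
  have := F_pos (m+1); omega

lemma keyP : ∀ n, F (n+3) = S (n+2) + S n + 1
  | 0 => by simp [S_succ, S_zero]; decide
  | 1 => by simp [S_succ, S_zero]; decide
  | n+2 => by
      have ih := keyP n
      have h1 : F (n+2+3) = F (n+1+3) + F (n+3) := F_add2 (n+3)
      have h2 : S (n+4) = F (n+4) + S n := S_add4 n
      show F (n+2+3) = S (n+2+2) + S (n+2) + 1
      rw [show n+2+2 = n+4 from by ring] at *
      rw [show n+1+3 = n+4 from by ring] at h1
      rw [show n+2+3 = n+5 from by ring] at *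
      omega

lemma keyF (r : ℕ) (hr : 1 ≤ r) : F r = S (r-1) + S (r-3) + 1 := by
  match r, hr with
  | 1, _ => simp [S_zero]; decide
  | 2, _ => simp [S_succ, S_zero]; decide
  | (n+3), _ => simpa using keyP n

lemma S_eq (r : ℕ) (hr : 1 ≤ r) : S r = F r + S (r-4) := by
  obtain ⟨m, rfl⟩ := Nat.exists_eq_add_of_le hr
  rw [show 1 + m = m + 1 from by ring, S_succ]

lemma sum_le_S : ∀ j : ℕ, ∀ P : Finset ℕ, (∀ i ∈ P, 1 ≤ i) →
    (∀ i ∈ P, ∀ k ∈ P, i < k → 4 ≤ k - i) → (∀ i ∈ P, i ≤ j) →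
    ∑ i ∈ P, F i ≤ S j := by
  intro j
  induction j using Nat.strong_induction_on with
  | _ j ih =>
    intro P h1 h4 hle
    rcases P.eq_empty_or_nonempty with rfl | hne
    · simp
    · set m := P.max' hne with hm
      have hmP : m ∈ P := P.max'_mem hne
      have hm1 : 1 ≤ m := h1 m hmP
      have hmj : m ≤ j := hle m hmP
      have herase : ∀ i ∈ P.erase m, i ≤ m - 4 := by
        intro i hi
        have hiP := Finset.mem_of_mem_erase hi
        have hne' := Finset.ne_of_mem_erase hi
        have hilt : i < m := lt_of_le_of_ne (P.le_max' i hiP) hne'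
        have := h4 i hiP m hmP hilt
        omega
      have hsum : ∑ i ∈ P.erase m, F i ≤ S (m - 4) :=
        ih (m-4) (by omega) _ (fun i hi => h1 i (Finset.mem_of_mem_erase hi))
          (fun i hi k hk hik => h4 i (Finset.mem_of_mem_erase hi) k (Finset.mem_of_mem_erase hk) hik)
          herase
      have hdec : ∑ i ∈ P, F i = F m + ∑ i ∈ P.erase m, F i := (Finset.add_sum_erase P F hmP).symm
      have hSm : S m = F m + S (m - 4) := S_eq m hm1
      have := S_mono hmj
      omega

lemma sum_le_S_int (j : ℕ) (P : Finset ℕ) (h1 : ∀ i ∈ P, 1 ≤ i)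
    (h4 : ∀ i ∈ P, ∀ k ∈ P, i < k → 4 ≤ k - i) (hle : ∀ i ∈ P, i ≤ j) :
    ∑ i ∈ P, (F i : ℤ) ≤ (S j : ℤ) := by
  have := sum_le_S j P h1 h4 hle
  have hcast : (∑ i ∈ P, (F i : ℤ)) = ((∑ i ∈ P, F i : ℕ) : ℤ) := by push_cast; ring
  rw [hcast]; exact_mod_cast this

lemma find_step : ∀ b m : ℕ, 0 < m → m ≤ S b →
    ∃ k, 1 ≤ k ∧ k ≤ b ∧ S (k-1) < m ∧ m ≤ S k := by
  intro b
  induction b with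
  | zero => intro m hm hle; rw [S_zero] at hle; omega
  | succ n ih =>
    intro m hm hle
    by_cases h : m ≤ S n
    · obtain ⟨k, hk1, hk2, hk3, hk4⟩ := ih m hm h
      exact ⟨k, hk1, by omega, hk3, hk4⟩
    · exact ⟨n+1, by omega, le_refl _, by simpa using by omega, hle⟩

lemma fd_swap {P N : Finset ℕ} (h : IsFarDiff P N) : IsFarDiff N P := by
  obtain ⟨h1, h2, h3, h4, h5⟩ := h
  exact ⟨h2, h1, h4, h3, fun i hi j hj =>
    ⟨(h5 j hj i hi).2.1, (h5 j hj i hi).1, fun he => (h5 j hj i hi).2.2 he.symm⟩⟩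

lemma fdVal_swap (P N : Finset ℕ) : fdVal N P = - fdVal P N := by
  simp [fdVal]

/-- Existence: every `m ∈ (S (r-1), S r]` has a representation with top `+F r`. -/
lemma exists_rep : ∀ r : ℕ, 1 ≤ r → ∀ m : ℤ, (S (r-1) : ℤ) < m → m ≤ (S r : ℤ) →
    m ∈ fdTopSet 1 r := by
  intro r
  induction r using Nat.strong_induction_on with
  | _ r ih =>
    intro hr m hlow hhigh
    rcases lt_trichotomy m (F r) with hm | hm | hm
    · -- m < F r : negative remainder
      have hSr1 : F r = S (r-1) + S (r-3) + 1 := keyF r hr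
      set t : ℕ := ((F r : ℤ) - m).toNat with ht
      have htv : (t : ℤ) = (F r : ℤ) - m := Int.toNat_of_nonneg (by omega)
      have htpos : 0 < t := by omega
      have htle : t ≤ S (r-3) := by
        have : (t : ℤ) ≤ (S (r-3) : ℤ) := by
          have : ((S (r-1) : ℕ) : ℤ) + ((S (r-3) : ℕ) : ℤ) + 1 = (F r : ℤ) := by
            exact_mod_cast hSr1.symm
          omega
        exact_mod_cast this
      have hr3 : 1 ≤ r - 3 := by
        by_contra h
        have : r - 3 = 0 := by omega
        rw [this, S_zero] at htle; omega
      obtain ⟨k, hk1, hk2, hk3, hk4⟩ := find_step (r-3) t htpos htle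
      obtain ⟨P, N, hfd, hval, hsm, hbd⟩ :=
        ih k (by omega) hk1 (t : ℤ) (by exact_mod_cast hk3) (by exact_mod_cast hk4)
      have hkP : k ∈ P := by
        rcases hsm with ⟨_, h⟩ | ⟨h, _⟩
        · exact h
        · norm_num at h
      have hPle : ∀ i ∈ P, i ≤ k := fun i hi => hbd i (Finset.mem_union_left _ hi)
      have hNle : ∀ i ∈ N, i ≤ k - 3 := by
        intro i hi
        have h5 := hfd.2.2.2.2 k hkP i hi
        have hik : i ≤ k := hbd i (Finset.mem_union_right _ hi)
        have := h5.2.2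
        have : i < k := by omega
        have := h5.2.1 this
        omega
      have hrN : r ∉ N := fun h => by have := hNle r h; omega
      refine ⟨insert r N, P, ?_, ?_, Or.inl ⟨rfl, Finset.mem_insert_self r N⟩, ?_⟩
      · obtain ⟨h1, h2, h3, h4, h5⟩ := hfd
        refine ⟨?_, h1, ?_, h3, ?_⟩
        · intro i hi
          rcases Finset.mem_insert.mp hi with hie | hi
          · omega
          · exact h2 i hi
        · intro i hi j hj hij
          rcases Finset.mem_insert.mp hi with hie | hi
          · rcases Finset.mem_insert.mp hj with hje | hj
            · omega
            · have := hNle j hj; omega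
          · rcases Finset.mem_insert.mp hj with hje | hj
            · have := hNle i hi; omega
            · exact h4 i hi j hj hij
        · intro i hi j hj
          rcases Finset.mem_insert.mp hi with hie | hi
          · have := hPle j hj
            exact ⟨fun h => by omega, fun h => by omega, by omega⟩
          · exact ⟨(h5 j hj i hi).2.1, (h5 j hj i hi).1,
              fun he => (h5 j hj i hi).2.2 he.symm⟩
      · rw [fdVal, Finset.sum_insert hrN]
        have : fdVal P N = (t : ℤ) := hval
        rw [fdVal] at this
        omega
      · intro i hi
        rcases Finset.mem_union.mp hi with hi | hi
        · rcases Finset.mem_insert.mp hi with hie | hi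
          · omega
          · have := hNle i hi; omega
        · have := hPle i hi; omega
    · -- m = F r : singleton
      refine ⟨{r}, ∅, ?_, ?_, Or.inl ⟨rfl, Finset.mem_singleton_self r⟩, ?_⟩
      · refine ⟨?_, by simp, ?_, by simp, by simp⟩
        · intro i hi; rw [Finset.mem_singleton] at hi; omega
        · intro i hi j hj hij
          rw [Finset.mem_singleton] at hi hj; omega
      · simp [fdVal, hm]
      · intro i hi; simp at hi; omega
    · -- m > F r : positive remainder
      have hSr : S r = F r + S (r-4) := S_eq r hr
      set t : ℕ := (m - (F r : ℤ)).toNat with ht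
      have htv : (t : ℤ) = m - (F r : ℤ) := Int.toNat_of_nonneg (by omega)
      have htpos : 0 < t := by omega
      have htle : t ≤ S (r-4) := by
        have hc : ((F r : ℕ) : ℤ) + ((S (r-4) : ℕ) : ℤ) = ((S r : ℕ) : ℤ) := by
          exact_mod_cast hSr.symm
        have : (t : ℤ) ≤ (S (r-4) : ℤ) := by omega
        exact_mod_cast this
      have hr4 : 1 ≤ r - 4 := by
        by_contra h
        have : r - 4 = 0 := by omega
        rw [this, S_zero] at htle; omega
      obtain ⟨k, hk1, hk2, hk3, hk4⟩ := find_step (r-4) t htpos htle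
      obtain ⟨P, N, hfd, hval, hsm, hbd⟩ :=
        ih k (by omega) hk1 (t : ℤ) (by exact_mod_cast hk3) (by exact_mod_cast hk4)
      have hPle : ∀ i ∈ P, i ≤ k := fun i hi => hbd i (Finset.mem_union_left _ hi)
      have hNle : ∀ i ∈ N, i ≤ k := fun i hi => hbd i (Finset.mem_union_right _ hi)
      have hrP : r ∉ P := fun h => by have := hPle r h; omega
      refine ⟨insert r P, N, ?_, ?_, Or.inl ⟨rfl, Finset.mem_insert_self r P⟩, ?_⟩
      · obtain ⟨h1, h2, h3, h4, h5⟩ := hfd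
        refine ⟨?_, h2, ?_, h4, ?_⟩
        · intro i hi
          rcases Finset.mem_insert.mp hi with hie | hi
          · omega
          · exact h1 i hi
        · intro i hi j hj hij
          rcases Finset.mem_insert.mp hi with hie | hi
          · rcases Finset.mem_insert.mp hj with hje | hj
            · omega
            · have := hPle j hj; omega
          · rcases Finset.mem_insert.mp hj with hje | hj
            · have := hPle i hi; omega
            · exact h3 i hi j hj hij
        · intro i hi j hj
          rcases Finset.mem_insert.mp hi with hie | hi
          · have := hNle j hj
            exact ⟨fun h => by omega, fun h => by omega, by omega⟩
          · exact h5 i hi j hj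
      · rw [fdVal, Finset.sum_insert hrP]
        have : fdVal P N = (t : ℤ) := hval
        rw [fdVal] at this
        omega
      · intro i hi
        rcases Finset.mem_union.mp hi with hi | hi
        · rcases Finset.mem_insert.mp hi with hie | hi
          · omega
          · have := hPle i hi; omega
        · have := hNle i hi; omega

/-- The set identity. -/
lemma fdTopSet_eq (r : ℕ) (hr : 1 ≤ r) :
    fdTopSet 1 r = Set.Ioc ((S (r - 1) : ℤ)) ((S r : ℤ)) := by
  ext m
  constructor
  · rintro ⟨P, N, hfd, hval, hsm, hbd⟩
    obtain ⟨h1, h2, h3, h4, h5⟩ := hfd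
    have hrP : r ∈ P := by
      rcases hsm with ⟨_, h⟩ | ⟨h, _⟩
      · exact h
      · norm_num at h
    have hPle : ∀ i ∈ P, i ≤ r := fun i hi => hbd i (Finset.mem_union_left _ hi)
    have hNle : ∀ i ∈ N, i ≤ r - 3 := by
      intro i hi
      have hh := h5 r hrP i hi
      have hik : i ≤ r := hbd i (Finset.mem_union_right _ hi)
      have : i < r := by have := hh.2.2; omega
      have := hh.2.1 this
      omega
    have hsP : ∑ i ∈ P, (F i : ℤ) ≤ (S r : ℤ) := sum_le_S_int r P h1 h3 hPle
    have hsN : ∑ i ∈ N, (F i : ℤ) ≤ (S (r-3) : ℤ) := sum_le_S_int (r-3) N h2 h4 hNle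
    have hsN0 : 0 ≤ ∑ i ∈ N, (F i : ℤ) :=
      Finset.sum_nonneg fun i _ => by positivity
    have hFin : (F r : ℤ) ≤ ∑ i ∈ P, (F i : ℤ) :=
      Finset.single_le_sum (f := fun i => (F i : ℤ)) (fun i _ => by positivity) hrP
    have hkey : ((F r : ℕ) : ℤ) = ((S (r-1) : ℕ) : ℤ) + ((S (r-3) : ℕ) : ℤ) + 1 := by
      exact_mod_cast keyF r hr
    rw [fdVal] at hval
    constructor
    · omega
    · omega
  · rintro ⟨hlow, hhigh⟩
    exact exists_rep r hr m hlow hhigh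

lemma fdTopSet_neg (r : ℕ) : fdTopSet (-1) r = Neg.neg '' (fdTopSet 1 r) := by
  ext m
  constructor
  · rintro ⟨P, N, hfd, hval, hsm, hbd⟩
    have hrN : r ∈ N := by
      rcases hsm with ⟨h, _⟩ | ⟨_, h⟩
      · norm_num at h
      · exact h
    refine ⟨-m, ⟨N, P, fd_swap hfd, ?_, Or.inl ⟨rfl, hrN⟩, ?_⟩, by ring⟩
    · rw [fdVal_swap, hval]
    · intro i hi
      exact hbd i (by rwa [Finset.union_comm])
  · rintro ⟨x, ⟨P, N, hfd, hval, hsm, hbd⟩, rfl⟩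
    have hrP : r ∈ P := by
      rcases hsm with ⟨_, h⟩ | ⟨h, _⟩
      · exact h
      · norm_num at h
    refine ⟨N, P, fd_swap hfd, ?_, Or.inr ⟨rfl, hrP⟩, ?_⟩
    · rw [fdVal_swap, hval]
    · intro i hi
      exact hbd i (by rwa [Finset.union_comm])

/-- For every `r ≥ 1`, the integers whose far-difference representation
has largest-index summand `+F_r` are exactly those in `(S_{r−1}, S_r]`; in particular
`N(+F_r) = S_r − S_{r−1}`, and by the symmetry `m ↔ −m`, `N(−F_r) = N(+F_r)`. -/
theorem fardifference_top_interval (r : ℕ) (hr : 1 ≤ r) :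
    fdTopSet 1 r = Set.Ioc ((S (r - 1) : ℤ)) ((S r : ℤ)) ∧
    (fdTopCount 1 r : ℤ) = (S r : ℤ) - (S (r - 1) : ℤ) ∧
    fdTopCount (-1) r = fdTopCount 1 r := by
  have hset := fdTopSet_eq r hr
  refine ⟨hset, ?_, ?_⟩
  · rw [fdTopCount, hset, ← Finset.coe_Ioc, Set.ncard_coe_finset, Int.card_Ioc]
    have : (S (r-1) : ℤ) ≤ (S r : ℤ) := by exact_mod_cast S_mono (show r - 1 ≤ r by omega)
    rw [Int.toNat_of_nonneg (by omega)]
  · rw [fdTopCount, fdTopCount, fdTopSet_neg]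
    exact Set.ncard_image_of_injective _ neg_injective
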